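/- Beaver's multiplication protocol is correct: given additive sharings [α], [β] of α, β in Z_{2^l} and a sharing of a triple (t₁, t₂, t₃) with t₃ = t₁·t₂, if each party P_i computes e_i = [α]_i − [t₁]_i, f_i = [β]_i − [t₂]_i, reconstructs e = e_0 + e_1 and f = f_0 + f_1, and outputs z_i = i·e·f + [t₁]_i·f + [t₂]_i·e + [t₃]_i, then z_0 + z_1 = α·β in Z_{2^l}. -/
import Mathlib


theorem beaver_multiplication_correct (l : ℕ)
    (α β t1 t2 t3 a0 a1 b0 b1 t10 t11 t20 t21 t30 t31 : ZMod (2 ^ l))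
    (ha : a0 + a1 = α) (hb : b0 + b1 = β)
    (ht1 : t10 + t11 = t1) (ht2 : t20 + t21 = t2) (ht3 : t30 + t31 = t3)
    (htriple : t3 = t1 * t2)
    (e f : ZMod (2 ^ l))
    (he : e = (a0 - t10) + (a1 - t11)) (hf : f = (b0 - t20) + (b1 - t21)) :
    ((0 : ZMod (2 ^ l)) * e * f + t10 * f + t20 * e + t30) +
      ((1 : ZMod (2 ^ l)) * e * f + t11 * f + t21 * e + t31) = α * β := by
  subst he hf ht1 ht2 ht3 ha hb; linear_combination htriple
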